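/- In the visible case with zero distortion, the rate distortion function equals the mutual information between the state and the measurement: R(0) = I(X;Z) = h(pα₁ + (1−p)α₂) − [p·h(α₁) + (1−p)·h(α₂)] for the two-coin source. -/
import Mathlib


open scoped BigOperators

/-- `W` is a channel (stochastic matrix) from `α` to `β`. -/
def IsChannel {α β : Type*} [Fintype β] (W : α → β → ℝ) : Prop :=
  ∀ a, (∀ b, 0 ≤ W a b) ∧ ∑ b, W a b = 1

/-- Marginal on the first coordinate. -/
noncomputable def margX {α β : Type*} [Fintype α] [Fintype β] (p : α × β → ℝ) : α → ℝ :=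
  fun a => ∑ b, p (a, b)

/-- Marginal on the second coordinate. -/
noncomputable def margY {α β : Type*} [Fintype α] [Fintype β] (p : α × β → ℝ) : β → ℝ :=
  fun b => ∑ a, p (a, b)

/-- Base-2 mutual information `I(X;Y) = D(P_XY ‖ P_X P_Y)`. -/
noncomputable def mi2 {α β : Type*} [Fintype α] [Fintype β] (p : α × β → ℝ) : ℝ :=
  ∑ z : α × β, (if p z = 0 then 0 else p z * Real.logb 2 (p z / (margX p z.1 * margY p z.2)))

/-- Binary entropy function `h(α) = −α log₂ α − (1−α) log₂ (1−α)`. -/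
noncomputable def binEnt (a : ℝ) : ℝ :=
  -(a * Real.logb 2 a) - (1 - a) * Real.logb 2 (1 - a)

lemma mul_mul_logb (a b : ℝ) :
    a * b * Real.logb 2 (a * b) = a * b * Real.logb 2 a + a * b * Real.logb 2 b := by
  rcases eq_or_ne a 0 with ha | ha
  · simp [ha]
  rcases eq_or_ne b 0 with hb | hb
  · simp [hb]
  rw [Real.logb_mul ha hb]; ring

lemma term_eq (u v m : ℝ) (hv : u ≠ 0 → v ≠ 0) (hm : u ≠ 0 → m ≠ 0) :
    (if u = 0 then 0 else u * Real.logb 2 (u / (v * m)))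
      = u * Real.logb 2 u - u * Real.logb 2 v - u * Real.logb 2 m := by
  rcases eq_or_ne u 0 with h | h
  · simp [h]
  rw [if_neg h, Real.logb_div h (mul_ne_zero (hv h) (hm h)), Real.logb_mul (hv h) (hm h)]
  ring

/-- Two-coin source, visible case, zero distortion: the rate distortion function
(the minimum of `I(X;Y)` over channels forced to reproduce `P_{XZ}`) equals
`I(X;Z) = h(pα₁ + (1−p)α₂) − [p h(α₁) + (1−p) h(α₂)]`. -/
theorem two_coin_visible_zero_distortion (p α₁ α₂ : ℝ)
    (hp : 0 ≤ p ∧ p ≤ 1) (h1 : 0 ≤ α₁ ∧ α₁ ≤ 1) (h2 : 0 ≤ α₂ ∧ α₂ ≤ 1)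
    (px : Bool → ℝ) (hpx : ∀ x, px x = if x then p else 1 - p)
    (pXZ : Bool × Bool → ℝ)
    (hpXZ : ∀ x z, pXZ (x, z) =
      px x * (if z then (if x then α₁ else α₂) else 1 - (if x then α₁ else α₂))) :
    sInf {r : ℝ | ∃ W : Bool → Bool → ℝ, IsChannel W ∧
          (∀ x z, px x * W x z = pXZ (x, z)) ∧
          r = mi2 (fun w : Bool × Bool => px w.1 * W w.1 w.2)}
        = mi2 pXZ ∧
      mi2 pXZ = binEnt (p * α₁ + (1 - p) * α₂) - (p * binEnt α₁ + (1 - p) * binEnt α₂) := by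
  obtain ⟨hp0, hp1⟩ := hp
  obtain ⟨h10, h11⟩ := h1
  obtain ⟨h20, h21⟩ := h2
  -- values of pXZ
  have hpxT : px true = p := by simp [hpx]
  have hpxF : px false = 1 - p := by simp [hpx]
  have hTT : pXZ (true, true) = p * α₁ := by rw [hpXZ]; simp [hpx]
  have hTF : pXZ (true, false) = p * (1 - α₁) := by rw [hpXZ]; simp [hpx]
  have hFT : pXZ (false, true) = (1 - p) * α₂ := by rw [hpXZ]; simp [hpx]
  have hFF : pXZ (false, false) = (1 - p) * (1 - α₂) := by rw [hpXZ]; simp [hpx]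
  -- nonnegativity
  have hnn : ∀ x z, 0 ≤ pXZ (x, z) := by
    intro x z
    cases x <;> cases z <;>
      simp only [hTT, hTF, hFT, hFF] <;> exact mul_nonneg (by linarith) (by linarith)
  -- marginals
  have hmx : ∀ x, margX pXZ x = px x := by
    intro x
    simp only [margX, Fintype.sum_bool, hpXZ]
    cases x <;> simp <;> ring
  have hmyT : margY pXZ true = p * α₁ + (1 - p) * α₂ := by
    simp only [margY, Fintype.sum_bool, hTT, hFT]
  have hmyF : margY pXZ false = 1 - (p * α₁ + (1 - p) * α₂) := by
    simp only [margY, Fintype.sum_bool, hTF, hFF]; ring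
  -- side conditions
  have hvx : ∀ x z, pXZ (x, z) ≠ 0 → px x ≠ 0 := by
    intro x z h hc
    exact h (by rw [hpXZ, hc, zero_mul])
  have hmT : ∀ x, pXZ (x, true) ≠ 0 → margY pXZ true ≠ 0 := by
    intro x h
    have h1 := hnn true true; have h2 := hnn false true
    have : 0 < pXZ (x, true) := lt_of_le_of_ne (hnn x true) (Ne.symm h)
    simp only [margY, Fintype.sum_bool]
    cases x <;> nlinarith
  have hmF : ∀ x, pXZ (x, false) ≠ 0 → margY pXZ false ≠ 0 := by
    intro x h
    have h1 := hnn true false; have h2 := hnn false false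
    have : 0 < pXZ (x, false) := lt_of_le_of_ne (hnn x false) (Ne.symm h)
    simp only [margY, Fintype.sum_bool]
    cases x <;> nlinarith
  -- the main computation
  have key : mi2 pXZ
      = binEnt (p * α₁ + (1 - p) * α₂) - (p * binEnt α₁ + (1 - p) * binEnt α₂) := by
    have e1 := term_eq (pXZ (true, true)) (px true) (margY pXZ true)
      (hvx true true) (hmT true)
    have e2 := term_eq (pXZ (true, false)) (px true) (margY pXZ false)
      (hvx true false) (hmF true)
    have e3 := term_eq (pXZ (false, true)) (px false) (margY pXZ true)
      (hvx false true) (hmT false)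
    have e4 := term_eq (pXZ (false, false)) (px false) (margY pXZ false)
      (hvx false false) (hmF false)
    simp only [mi2, Fintype.sum_prod_type, Fintype.sum_bool, hmx] at *
    rw [e1, e2, e3, e4]
    simp only [hTT, hTF, hFT, hFF, hmyT, hmyF, hpxT, hpxF, mul_mul_logb]
    simp only [binEnt]
    ring
  refine ⟨?_, key⟩
  -- the sInf part
  have hS : {r : ℝ | ∃ W : Bool → Bool → ℝ, IsChannel W ∧
        (∀ x z, px x * W x z = pXZ (x, z)) ∧
        r = mi2 (fun w : Bool × Bool => px w.1 * W w.1 w.2)} = {mi2 pXZ} := by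
    ext r
    simp only [Set.mem_setOf_eq, Set.mem_singleton_iff]
    constructor
    · rintro ⟨W, _, hc, rfl⟩
      congr 1
      funext w
      exact hc w.1 w.2
    · rintro rfl
      refine ⟨fun x z => if x then (if z then α₁ else 1 - α₁)
        else (if z then α₂ else 1 - α₂), ?_, ?_, ?_⟩
      · intro a
        refine ⟨fun b => ?_, ?_⟩
        · cases a <;> cases b <;> simp <;> linarith
        · cases a <;> simp [Fintype.sum_bool]
      · intro x z
        rw [hpXZ]
        cases x <;> cases z <;> simp
      · congr 1
        funext w
        rw [hpXZ]
        cases hw1 : w.1 <;> cases hw2 : w.2 <;> simp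
  rw [hS, csInf_singleton]
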